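/- Let η ∈ C¹(ℝ²) with η = 1 on B_{3/4}, η = 0 outside B₁, and ‖∇η‖_∞ ≤ C₀. For u : Λ → ℝ with Du ∈ ℓ²(B) define the truncation Π_R u(ξ) = η(ξ/R)(u(ξ) − a_R), where a_R is the average of the P1 interpolant of u over the annulus A_R = B_R \ B_{R/2+1}. Then supp(D(Π_R u − u restricted to B_{R/2})) is contained in bonds meeting ℝ² \ B_{R/2}, and ‖DΠ_R u − Du‖_{ℓ²(B)} ≤ γ ‖Du‖_{ℓ²(B \ B_{R/2})} with γ independent of R and u. -/

import Mathlib

noncomputable section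
open Real Metric

abbrev E2 := EuclideanSpace ℝ (Fin 2)

def la1 : E2 := !₂[1, 0]
def la2 : E2 := !₂[1/2, Real.sqrt 3 / 2]

def TriLat : Set E2 :=
  {x | ∃ m n : ℤ, x = (3 : ℝ)⁻¹ • (la1 + la2) + m • la1 + n • la2}

def Bonds : Set (E2 × E2) :=
  {p | p.1 ∈ TriLat ∧ p.2 ∈ TriLat ∧ ‖p.2 - p.1‖ = 1}

/-- Bonds lying outside the ball B_{R/2}. -/
def OuterBonds (R : ℝ) : Set (E2 × E2) :=
  {p ∈ Bonds | p.1 ∉ ball (0 : E2) (R / 2) ∨ p.2 ∉ ball (0 : E2) (R / 2)}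

namespace St15

def Qf (z : ℤ × ℤ) : ℤ := z.1^2 + z.1*z.2 + z.2^2
def hZ (z : ℤ × ℤ) : ℤ := max |z.1| (max |z.2| |z.1 + z.2|)
def NQ (z : ℤ × ℤ) : ℤ := Qf z + z.1 + z.2

def six : Finset (ℤ × ℤ) := {(1,0),(-1,0),(0,1),(0,-1),(1,-1),(-1,1)}

lemma mem_six {e : ℤ × ℤ} : e ∈ six ↔
    e = (1,0) ∨ e = (-1,0) ∨ e = (0,1) ∨ e = (0,-1) ∨ e = (1,-1) ∨ e = (-1,1) := by
  simp [six]

def vec (z : ℤ × ℤ) : E2 := (z.1 : ℝ) • la1 + (z.2 : ℝ) • la2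

def Pt (z : ℤ × ℤ) : E2 := (3 : ℝ)⁻¹ • (la1 + la2) + vec z

lemma inner_la (i j : Fin 2) : True := trivial

lemma inner_la11 : (inner ℝ la1 la1 : ℝ) = 1 := by
  rw [PiLp.inner_apply]
  simp [la1, Fin.sum_univ_two]

lemma inner_la12 : (inner ℝ la1 la2 : ℝ) = 1/2 := by
  rw [PiLp.inner_apply]
  simp [la1, la2, Fin.sum_univ_two]

lemma inner_la21 : (inner ℝ la2 la1 : ℝ) = 1/2 := by
  rw [PiLp.inner_apply]
  simp [la1, la2, Fin.sum_univ_two]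

lemma inner_la22 : (inner ℝ la2 la2 : ℝ) = 1 := by
  rw [PiLp.inner_apply]
  simp only [la2, Fin.sum_univ_two, RCLike.inner_apply, conj_trivial,
    Matrix.cons_val_zero, Matrix.cons_val_one, Matrix.head_cons]
  have h3 : Real.sqrt 3 * Real.sqrt 3 = 3 := Real.mul_self_sqrt (by norm_num)
  nlinarith

lemma norm_vec_sq (z : ℤ × ℤ) : ‖vec z‖^2 = (Qf z : ℝ) := by
  rw [← real_inner_self_eq_norm_sq]
  unfold vec
  simp only [inner_add_add_self, real_inner_smul_left, real_inner_smul_right,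
    inner_la11, inner_la12, inner_la21, inner_la22]
  push_cast [Qf]
  ring

lemma norm_Pt_sq (z : ℤ × ℤ) : ‖Pt z‖^2 = (NQ z : ℝ) + 1/3 := by
  rw [← real_inner_self_eq_norm_sq]
  unfold Pt vec
  have e1 : (3:ℝ)⁻¹ • (la1 + la2) + ((z.1:ℝ) • la1 + (z.2:ℝ) • la2)
      = ((z.1:ℝ) + 3⁻¹) • la1 + ((z.2:ℝ) + 3⁻¹) • la2 := by
    rw [smul_add]; module
  rw [e1]
  simp only [inner_add_add_self, real_inner_smul_left, real_inner_smul_right,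
    inner_la11, inner_la12, inner_la21, inner_la22]
  push_cast [NQ, Qf]
  ring

lemma vec_sub (z w : ℤ × ℤ) : vec z - vec w = vec (z - w) := by
  unfold vec; push_cast [Prod.fst_sub, Prod.snd_sub]; module

lemma vec_add (z w : ℤ × ℤ) : vec (z + w) = vec z + vec w := by
  unfold vec; push_cast [Prod.fst_add, Prod.snd_add]; module

lemma Pt_sub (z w : ℤ × ℤ) : Pt z - Pt w = vec (z - w) := by
  unfold Pt; rw [← vec_sub]; abel

lemma vec_eq_zero {z : ℤ × ℤ} (h : vec z = 0) : z = 0 := by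
  have h2 : ‖vec z‖^2 = 0 := by rw [h]; simp
  rw [norm_vec_sq] at h2
  have hq : Qf z = 0 := by exact_mod_cast h2
  unfold Qf at hq
  have h4 : (2*z.1 + z.2)^2 + 3*z.2^2 = 0 := by ring_nf; linarith [hq]
  have := sq_nonneg (2*z.1+z.2); have := sq_nonneg z.2
  have hz2 : z.2 = 0 := by nlinarith
  have hz1 : z.1 = 0 := by nlinarith
  exact Prod.ext hz1 hz2

lemma Pt_inj : Function.Injective Pt := by
  intro z w h
  have : Pt z - Pt w = 0 := by rw [h]; simp
  rw [Pt_sub] at this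
  have := vec_eq_zero this
  have : z - w = 0 := this
  exact sub_eq_zero.mp (by exact_mod_cast this)

lemma Qf_eq_one_iff {e : ℤ × ℤ} : Qf e = 1 ↔ e ∈ six := by
  constructor
  · intro h
    rcases e with ⟨m, n⟩
    unfold Qf at h; simp only at h
    rw [mem_six]
    have h4 : (2*m + n)^2 + 3*n^2 = 4 := by nlinarith
    have hn : n = -1 ∨ n = 0 ∨ n = 1 := by
      have h5 : -1 ≤ n ∧ n ≤ 1 := by constructor <;> nlinarith [sq_nonneg (2*m+n)]
      omega
    simp only [Prod.ext_iff]
    rcases hn with hn | hn | hn <;> subst hn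
    · have hm : m * (m - 1) = 0 := by nlinarith
      rcases mul_eq_zero.mp hm with hm | hm <;> omega
    · have hm : (m - 1) * (m + 1) = 0 := by nlinarith
      rcases mul_eq_zero.mp hm with hm | hm <;> omega
    · have hm : m * (m + 1) = 0 := by nlinarith
      rcases mul_eq_zero.mp hm with hm | hm <;> omega
  · intro h
    rw [mem_six] at h
    rcases h with h|h|h|h|h|h <;> subst h <;> rfl

lemma norm_vec_six {e : ℤ × ℤ} (he : e ∈ six) : ‖vec e‖ = 1 := by
  have h := norm_vec_sq e
  rw [(Qf_eq_one_iff.mpr he)] at h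
  have : ‖vec e‖^2 = 1 := by rw [h]; norm_num
  nlinarith [norm_nonneg (vec e)]

lemma TriLat_eq_range : TriLat = Set.range Pt := by
  ext x
  constructor
  · rintro ⟨m, n, rfl⟩
    exact ⟨(m, n), by unfold Pt vec; rw [← Int.cast_smul_eq_zsmul ℝ m la1, ← Int.cast_smul_eq_zsmul ℝ n la2]; abel⟩
  · rintro ⟨⟨m, n⟩, rfl⟩
    exact ⟨m, n, by unfold Pt vec; rw [← Int.cast_smul_eq_zsmul ℝ m la1, ← Int.cast_smul_eq_zsmul ℝ n la2]; abel⟩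




def dirz (z : ℤ × ℤ) : ℤ × ℤ :=
  if 1 ≤ z.1 ∧ 0 ≤ z.2 then (1,0)
  else if 1 ≤ z.2 ∧ 1 ≤ z.1 + z.2 then (0,1)
  else if 1 ≤ z.2 then (-1,0)
  else if z.1 ≤ -1 ∧ z.1 + z.2 ≤ -1 then (-1,0)
  else if z.2 ≤ -1 ∧ z.1 + z.2 ≤ -1 then (0,-1)
  else (1,0)

def lin (z e : ℤ × ℤ) (t : ℤ) : ℤ × ℤ := (z.1 + t * e.1, z.2 + t * e.2)

def ρh (k i : ℤ) : ℤ × ℤ :=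
  if i < k then (k - i, i)
  else if i < 2*k then (k - i, k)
  else if i < 3*k then (-k, 3*k - i)
  else if i < 4*k then (i - 4*k, 3*k - i)
  else if i < 5*k then (i - 4*k, -k)
  else (k, i - 6*k)

lemma hZ_nonneg (z : ℤ × ℤ) : 0 ≤ hZ z := by
  simp only [hZ, abs]; omega

lemma Qf_le_hZ_sq (z : ℤ × ℤ) : Qf z ≤ hZ z ^ 2 := by
  rcases z with ⟨m, n⟩
  simp only [Qf, hZ, abs]
  rcases le_or_gt (m * n) 0 with h | h
  · -- Qf ≤ max(m², n²)
    have h1 : m^2 + m*n + n^2 ≤ max (m^2) (n^2) := by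
      rcases le_total (m^2) (n^2) with hc | hc
      · simp only [max_eq_right hc]; nlinarith
      · simp only [max_eq_left hc]; nlinarith
    have h2 : m^2 ≤ (max (max m (-m)) (max (max n (-n)) (max (m+n) (-(m+n)))))^2 := by
      have : |m| ≤ max (max m (-m)) (max (max n (-n)) (max (m+n) (-(m+n)))) := by
        simp only [abs]; omega
      nlinarith [abs_nonneg m, sq_abs m]
    have h3 : n^2 ≤ (max (max m (-m)) (max (max n (-n)) (max (m+n) (-(m+n)))))^2 := by
      have : |n| ≤ max (max m (-m)) (max (max n (-n)) (max (m+n) (-(m+n)))) := by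
        simp only [abs]; omega
      nlinarith [abs_nonneg n, sq_abs n]
    rcases max_cases (m^2) (n^2) with ⟨he, _⟩ | ⟨he, _⟩ <;> omega
  · have h1 : m^2 + m*n + n^2 ≤ (m+n)^2 := by nlinarith
    have h2 : (m+n)^2 ≤ (max (max m (-m)) (max (max n (-n)) (max (m+n) (-(m+n)))))^2 := by
      have : |m+n| ≤ max (max m (-m)) (max (max n (-n)) (max (m+n) (-(m+n)))) := by
        simp only [abs]; omega
      nlinarith [abs_nonneg (m+n), sq_abs (m+n)]
    omega

lemma three_hZ_sq_le_four_Qf (z : ℤ × ℤ) : 3 * hZ z ^ 2 ≤ 4 * Qf z := by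
  rcases z with ⟨m, n⟩
  simp only [Qf, hZ]
  have k1 : 3 * m^2 ≤ 4 * (m^2 + m*n + n^2) := by nlinarith [sq_nonneg (m + 2*n)]
  have k2 : 3 * n^2 ≤ 4 * (m^2 + m*n + n^2) := by nlinarith [sq_nonneg (2*m + n)]
  have k3 : 3 * (m+n)^2 ≤ 4 * (m^2 + m*n + n^2) := by nlinarith [sq_nonneg (m - n)]
  have habs : hZ (m,n) = |m| ∨ hZ (m,n) = |n| ∨ hZ (m,n) = |m+n| := by
    simp only [hZ, abs]; omega
  simp only [hZ] at habs
  rcases habs with h | h | h <;> rw [h] <;> rw [sq_abs] <;> assumption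

lemma dirz_cases (z : ℤ × ℤ) :
    dirz z = (1,0) ∨ dirz z = (-1,0) ∨ dirz z = (0,1) ∨ dirz z = (0,-1) := by
  unfold dirz; split_ifs <;> simp

lemma hZ_lin (z : ℤ × ℤ) (hz : 1 ≤ hZ z) (t : ℤ) (ht : 0 ≤ t) :
    hZ (lin z (dirz z) t) = hZ z + t := by
  rcases z with ⟨m, n⟩
  simp only [hZ, abs, dirz, lin] at *
  split_ifs <;> simp only [] <;> omega

lemma NQ_lin_mono (z : ℤ × ℤ) (t : ℤ) (ht : 0 ≤ t) :
    NQ z ≤ NQ (lin z (dirz z) t) := by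
  rcases z with ⟨m, n⟩
  simp only [NQ, Qf, dirz, lin]
  split_ifs <;> simp only [] <;>
    first
    | nlinarith [mul_nonneg ht ht, mul_nonneg ht (show (0:ℤ) ≤ 2*m+n+1 by omega)]
    | nlinarith [mul_nonneg ht ht, mul_nonneg ht (show (0:ℤ) ≤ m+2*n+1 by omega)]
    | nlinarith [mul_nonneg ht ht, mul_nonneg ht (show (0:ℤ) ≤ -(2*m)-n-1 by omega)]
    | nlinarith [mul_nonneg ht ht, mul_nonneg ht (show (0:ℤ) ≤ -m-2*n-1 by omega)]

lemma ρh_level (k i : ℤ) (hk : 1 ≤ k) (h0 : 0 ≤ i) (h6 : i ≤ 6*k) :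
    hZ (ρh k i) = k := by
  simp only [hZ, abs, ρh]
  split_ifs <;> simp only [] <;> omega

lemma ρh_adj (k i : ℤ) (hk : 1 ≤ k) (h0 : 0 ≤ i) (h6 : i < 6*k) :
    ρh k (i+1) - ρh k i = (1,0) ∨ ρh k (i+1) - ρh k i = (-1,0) ∨
    ρh k (i+1) - ρh k i = (0,1) ∨ ρh k (i+1) - ρh k i = (0,-1) ∨
    ρh k (i+1) - ρh k i = (1,-1) ∨ ρh k (i+1) - ρh k i = (-1,1) := by
  simp only [ρh, Prod.ext_iff, Prod.mk_sub_mk]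
  split_ifs <;> simp only [Prod.mk.injEq, Prod.fst_sub, Prod.snd_sub] <;> omega

lemma ρh_injOn (k i j : ℤ) (hk : 1 ≤ k) (h0 : 0 ≤ i) (h6 : i < 6*k)
    (g0 : 0 ≤ j) (g6 : j < 6*k) (h : ρh k i = ρh k j) : i = j := by
  simp only [ρh, Prod.ext_iff] at h
  split_ifs at h <;> omega

lemma ρh_cover (k : ℤ) (hk : 1 ≤ k) (z : ℤ × ℤ) (h : hZ z = k) :
    ∃ i, 0 ≤ i ∧ i < 6*k ∧ ρh k i = z := by
  rcases z with ⟨m, n⟩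
  simp only [hZ, abs] at h
  by_cases c1 : 1 ≤ m ∧ 0 ≤ n
  · exact ⟨n, by omega, by omega, by simp only [ρh, Prod.ext_iff]; split_ifs <;> omega⟩
  by_cases c2 : m ≤ 0 ∧ 1 ≤ n ∧ 1 ≤ m + n
  · exact ⟨2*k - n - m, by omega, by omega, by simp only [ρh, Prod.ext_iff]; split_ifs <;> omega⟩
  by_cases c3 : 1 ≤ n ∧ m + n ≤ 0
  · exact ⟨3*k - n, by omega, by omega, by simp only [ρh, Prod.ext_iff]; split_ifs <;> omega⟩
  by_cases c4 : n ≤ 0 ∧ m ≤ -1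
  · exact ⟨3*k - n, by omega, by omega, by simp only [ρh, Prod.ext_iff]; split_ifs <;> omega⟩
  by_cases c5 : 0 ≤ m ∧ n ≤ -1 ∧ m + n ≤ -1
  · exact ⟨4*k + m, by omega, by omega, by simp only [ρh, Prod.ext_iff]; split_ifs <;> omega⟩
  · exact ⟨6*k + n, by omega, by omega, by simp only [ρh, Prod.ext_iff]; split_ifs <;> omega⟩

lemma ρh_zero (k : ℤ) (hk : 1 ≤ k) : ρh k 0 = (k, 0) := by
  simp only [ρh, Prod.ext_iff]; split_ifs <;> constructor <;> omega


end St15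
-- Part 3: generic helpers
namespace St15

lemma sq_le_of_nonneg {a b : ℝ} (ha : 0 ≤ a) (hb : 0 ≤ b) (h : a^2 ≤ b^2) : a ≤ b := by
  nlinarith

lemma tele (f : ℕ → ℝ) (n : ℕ) :
    (f n - f 0)^2 ≤ (n : ℝ) * ∑ t ∈ Finset.range n, (f (t+1) - f t)^2 := by
  have h1 : f n - f 0 = ∑ t ∈ Finset.range n, (f (t+1) - f t) := (Finset.sum_range_sub f n).symm
  have h2 : (∑ t ∈ Finset.range n, (1:ℝ) * (f (t+1) - f t))^2 ≤
      (∑ t ∈ Finset.range n, (1:ℝ)^2) * ∑ t ∈ Finset.range n, (f (t+1) - f t)^2 :=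
    Finset.sum_mul_sq_le_sq_mul_sq _ _ _
  simp only [one_mul, one_pow, Finset.sum_const, Finset.card_range, nsmul_eq_mul, mul_one] at h2
  rw [h1]
  exact h2

lemma sum_image_le {α β : Type*} [DecidableEq β] (s : Finset α) (g : α → β) (f : β → ℝ)
    (h0 : ∀ x, 0 ≤ f x) : ∑ x ∈ s.image g, f x ≤ ∑ x ∈ s, f (g x) := by
  classical
  induction s using Finset.induction with
  | empty => simp
  | @insert a s ha ih =>
    rw [Finset.image_insert, Finset.sum_insert ha]
    by_cases hg : g a ∈ s.image g
    · rw [Finset.insert_eq_self.mpr hg]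
      linarith [h0 (g a)]
    · rw [Finset.sum_insert hg]
      linarith

lemma sq_add_le {x y z : ℝ} : (x - z)^2 ≤ 2*(x - y)^2 + 2*(y - z)^2 := by
  nlinarith [sq_nonneg ((x - y) - (y - z))]

end St15



namespace St15

lemma norm_Pt_zero_le : ‖Pt (0 : ℤ × ℤ)‖ ≤ 3/5 := by
  have h : ‖Pt 0‖^2 = 1/3 := by
    have := norm_Pt_sq 0
    simpa [NQ, Qf] using this
  nlinarith [norm_nonneg (Pt (0 : ℤ × ℤ))]

lemma vec_zero : vec (0 : ℤ × ℤ) = 0 := by unfold vec; simp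

lemma Pt_eq_add (z : ℤ × ℤ) : Pt z = Pt 0 + vec z := by
  unfold Pt; rw [vec_zero]; abel

lemma norm_vec_le (z : ℤ × ℤ) : ‖vec z‖ ≤ ‖Pt z‖ + 3/5 := by
  have h1 : vec z = Pt z - Pt 0 := by rw [Pt_eq_add]; abel
  calc ‖vec z‖ = ‖Pt z - Pt 0‖ := by rw [h1]
    _ ≤ ‖Pt z‖ + ‖Pt 0‖ := norm_sub_le _ _
    _ ≤ ‖Pt z‖ + 3/5 := by linarith [norm_Pt_zero_le]

lemma norm_Pt_le_hZ (z : ℤ × ℤ) : ‖Pt z‖ ≤ (hZ z : ℝ) + 3/5 := by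
  have h1 : (Qf z : ℝ) ≤ ((hZ z : ℝ))^2 := by exact_mod_cast Qf_le_hZ_sq z
  have h2 : ‖vec z‖^2 = (Qf z : ℝ) := norm_vec_sq z
  have h3 : ‖vec z‖ ≤ (hZ z : ℝ) := by
    apply sq_le_of_nonneg (norm_nonneg _) (by exact_mod_cast hZ_nonneg z)
    rw [h2]; exact h1
  calc ‖Pt z‖ = ‖Pt 0 + vec z‖ := by rw [← Pt_eq_add]
    _ ≤ ‖Pt 0‖ + ‖vec z‖ := norm_add_le _ _
    _ ≤ (hZ z : ℝ) + 3/5 := by linarith [norm_Pt_zero_le]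

lemma hZ_sq_le (z : ℤ × ℤ) : 3 * ((hZ z : ℝ))^2 ≤ 4 * (‖Pt z‖ + 3/5)^2 := by
  have h1 : (3 : ℝ) * ((hZ z : ℝ))^2 ≤ 4 * (Qf z : ℝ) := by exact_mod_cast three_hZ_sq_le_four_Qf z
  have h2 : (Qf z : ℝ) = ‖vec z‖^2 := (norm_vec_sq z).symm
  have h3 := norm_vec_le z
  nlinarith [norm_nonneg (vec z), norm_nonneg (Pt z)]

lemma hZ_ge_norm (z : ℤ × ℤ) : ‖Pt z‖ - 3/5 ≤ (hZ z : ℝ) := by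
  linarith [norm_Pt_le_hZ z]

end St15

namespace St15

def ActiveF (R : ℝ) : Finset (ℤ × ℤ) :=
  ((Finset.Icc (-⌈2*R⌉) ⌈2*R⌉) ×ˢ (Finset.Icc (-⌈2*R⌉) ⌈2*R⌉)).filter
    (fun z => 3*R/4 - 1 ≤ ‖Pt z‖ ∧ ‖Pt z‖ ≤ R + 1)

lemma hZ_le_of_norm {R : ℝ} (hR : 4 ≤ R) {z : ℤ × ℤ} (h : ‖Pt z‖ ≤ R + 1) :
    (hZ z : ℝ) ≤ 6*R/5 + 2 := by
  have h1 := hZ_sq_le z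
  have h0 : (0:ℝ) ≤ (hZ z : ℝ) := by exact_mod_cast hZ_nonneg z
  nlinarith [norm_nonneg (Pt z)]

lemma mem_ActiveF {R : ℝ} (hR : 4 ≤ R) {z : ℤ × ℤ}
    (h1 : 3*R/4 - 1 ≤ ‖Pt z‖) (h2 : ‖Pt z‖ ≤ R + 1) : z ∈ ActiveF R := by
  have hh : (hZ z : ℝ) ≤ 6*R/5 + 2 := hZ_le_of_norm hR h2
  have h2R : (hZ z : ℝ) ≤ 2*R := by nlinarith
  have hceil : (2*R : ℝ) ≤ (⌈2*R⌉ : ℝ) := Int.le_ceil _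
  have hint : hZ z ≤ ⌈2*R⌉ := by exact_mod_cast le_trans h2R hceil
  have hm : -hZ z ≤ z.1 ∧ z.1 ≤ hZ z ∧ -hZ z ≤ z.2 ∧ z.2 ≤ hZ z := by
    simp only [hZ, abs]; omega
  refine Finset.mem_filter.mpr ⟨Finset.mem_product.mpr ⟨?_, ?_⟩, h1, h2⟩ <;>
    rw [Finset.mem_Icc] <;> omega
  
lemma card_ActiveF {R : ℝ} (hR : 4 ≤ R) : ((ActiveF R).card : ℝ) ≤ (4*R + 3)^2 := by
  have h1 : (ActiveF R).card ≤ (2*⌈2*R⌉ + 1).toNat * (2*⌈2*R⌉+1).toNat := by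
    calc (ActiveF R).card ≤ ((Finset.Icc (-⌈2*R⌉) ⌈2*R⌉) ×ˢ (Finset.Icc (-⌈2*R⌉) ⌈2*R⌉)).card :=
        Finset.card_filter_le _ _
      _ = (2*⌈2*R⌉ + 1).toNat * (2*⌈2*R⌉+1).toNat := by
        rw [Finset.card_product, Int.card_Icc]
        congr 1 <;> congr 1 <;> ring
  have hc : (⌈2*R⌉ : ℝ) ≤ 2*R + 1 := le_of_lt (Int.ceil_lt_add_one _)
  have hc0 : (0:ℤ) ≤ ⌈2*R⌉ := by
    have : (0:ℝ) ≤ 2*R := by linarith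
    exact_mod_cast le_trans this (Int.le_ceil _)
  have h2 : ((2*⌈2*R⌉ + 1).toNat : ℝ) ≤ 4*R + 3 := by
    have : ((2*⌈2*R⌉ + 1).toNat : ℤ) = 2*⌈2*R⌉ + 1 := Int.toNat_of_nonneg (by omega)
    have h3 : (((2*⌈2*R⌉ + 1).toNat : ℤ) : ℝ) = 2*(⌈2*R⌉:ℝ) + 1 := by rw [this]; push_cast; ring
    push_cast at h3 ⊢
    rw [h3]; linarith
  have h4 : ((ActiveF R).card : ℝ) ≤ ((2*⌈2*R⌉ + 1).toNat : ℝ) * ((2*⌈2*R⌉+1).toNat : ℝ) := by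
    exact_mod_cast h1
  have h5 : (0:ℝ) ≤ ((2*⌈2*R⌉+1).toNat : ℝ) := Nat.cast_nonneg _
  calc ((ActiveF R).card : ℝ) ≤ _ := h4
    _ ≤ (4*R+3) * (4*R+3) := by nlinarith
    _ = (4*R+3)^2 := by ring

lemma outer_of_norms {R : ℝ} {p : E2 × E2} (h1 : p.1 ∈ TriLat) (h2 : p.2 ∈ TriLat)
    (hb : ‖p.2 - p.1‖ = 1) (hn : R/2 ≤ ‖p.1‖) : p ∈ OuterBonds R := by
  refine ⟨⟨h1, h2, hb⟩, Or.inl ?_⟩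
  rw [mem_ball_zero_iff]
  linarith

lemma summable_indicator_bonds {u : E2 → ℝ}
    (hsB : Summable (fun b : Bonds => (u (b : E2 × E2).2 - u (b : E2 × E2).1) ^ 2)) :
    Summable (Set.indicator Bonds (fun p : E2 × E2 => (u p.2 - u p.1)^2)) := by
  rw [← summable_subtype_iff_indicator]
  exact hsB

lemma summable_indicator_outer {R : ℝ} {u : E2 → ℝ}
    (hsB : Summable (fun b : Bonds => (u (b : E2 × E2).2 - u (b : E2 × E2).1) ^ 2)) :
    Summable (Set.indicator (OuterBonds R) (fun p : E2 × E2 => (u p.2 - u p.1)^2)) := by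
  apply Summable.of_nonneg_of_le ?_ ?_ (summable_indicator_bonds hsB)
  · intro p; exact Set.indicator_nonneg (fun q _ => sq_nonneg _) p
  · intro p
    apply Set.indicator_le_indicator_of_subset (fun q hq => hq.1) (fun q => sq_nonneg _)

lemma outer_tsum_eq {R : ℝ} (u : E2 → ℝ) :
    ∑' (b : OuterBonds R), (u (b : E2 × E2).2 - u (b : E2 × E2).1)^2 =
    ∑' (p : E2 × E2), Set.indicator (OuterBonds R) (fun p : E2 × E2 => (u p.2 - u p.1)^2) p := by
  simpa using tsum_subtype (OuterBonds R) (fun p : E2 × E2 => (u p.2 - u p.1)^2)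

lemma sum_le_outer_tsum {R : ℝ} {u : E2 → ℝ}
    (hsB : Summable (fun b : Bonds => (u (b : E2 × E2).2 - u (b : E2 × E2).1) ^ 2))
    (F : Finset (E2 × E2)) (hF : ∀ p ∈ F, p ∈ OuterBonds R) :
    ∑ p ∈ F, (u p.2 - u p.1)^2 ≤
      ∑' (b : OuterBonds R), (u (b : E2 × E2).2 - u (b : E2 × E2).1)^2 := by
  rw [outer_tsum_eq]
  have h1 : ∑ p ∈ F, (u p.2 - u p.1)^2 =
      ∑ p ∈ F, Set.indicator (OuterBonds R) (fun p : E2 × E2 => (u p.2 - u p.1)^2) p := by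
    apply Finset.sum_congr rfl
    intro p hp
    rw [Set.indicator_of_mem (hF p hp)]
  rw [h1]
  apply Summable.sum_le_tsum F (fun p _ => Set.indicator_nonneg (fun q _ => sq_nonneg _) p)
    (summable_indicator_outer hsB)

lemma outer_tsum_nonneg {R : ℝ} (u : E2 → ℝ) :
    0 ≤ ∑' (b : OuterBonds R), (u (b : E2 × E2).2 - u (b : E2 × E2).1)^2 :=
  tsum_nonneg (fun _ => sq_nonneg _)

end St15
namespace St15

def hexSum (u : E2 → ℝ) (k : ℤ) : ℝ :=
  ∑ t ∈ Finset.range ((6*k).toNat), (u (Pt (ρh k ((t:ℤ)+1))) - u (Pt (ρh k (t:ℤ))))^2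

def Az (u : E2 → ℝ) (kk : ℤ) (z : ℤ × ℤ) : ℝ :=
  ∑ t ∈ Finset.range ((kk - hZ z).toNat),
    (u (Pt (lin z (dirz z) ((t:ℤ)+1))) - u (Pt (lin z (dirz z) (t:ℤ))))^2

lemma hexSum_nonneg (u : E2 → ℝ) (k : ℤ) : 0 ≤ hexSum u k :=
  Finset.sum_nonneg (fun _ _ => sq_nonneg _)

lemma Az_nonneg (u : E2 → ℝ) (kk : ℤ) (z : ℤ × ℤ) : 0 ≤ Az u kk z :=
  Finset.sum_nonneg (fun _ _ => sq_nonneg _)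

lemma hexk_one {R : ℝ} (hR : 4 ≤ R) {k : ℤ} (hk : 6*R/5 + 3 ≤ (k:ℝ)) : 1 ≤ k := by
  have : (1:ℝ) ≤ (k:ℝ) := by linarith
  exact_mod_cast this

lemma hex_outer_norm {R : ℝ} (hR : 4 ≤ R) {k : ℤ} (hk : 6*R/5 + 3 ≤ (k:ℝ))
    {i : ℤ} (hi0 : 0 ≤ i) (hi6 : i ≤ 6*k) : R/2 ≤ ‖Pt (ρh k i)‖ := by
  have hk1 : 1 ≤ k := hexk_one hR hk
  have hlev : hZ (ρh k i) = k := ρh_level k i hk1 hi0 hi6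
  have hsq := hZ_sq_le (ρh k i)
  rw [hlev] at hsq
  nlinarith [norm_nonneg (Pt (ρh k i))]

lemma mem_six_dirz (z : ℤ × ℤ) : dirz z ∈ six := by
  rcases dirz_cases z with h|h|h|h <;> rw [h, mem_six] <;> tauto

lemma mem_six_adj (k i : ℤ) (hk : 1 ≤ k) (h0 : 0 ≤ i) (h6 : i < 6*k) :
    ρh k (i+1) - ρh k i ∈ six := by
  rcases ρh_adj k i hk h0 h6 with h|h|h|h|h|h <;> rw [h, mem_six] <;> tauto

lemma Pt_mem_TriLat (z : ℤ × ℤ) : Pt z ∈ TriLat := by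
  rw [TriLat_eq_range]; exact ⟨z, rfl⟩

lemma hex_bond_outer {R : ℝ} (hR : 4 ≤ R) {k : ℤ} (hk : 6*R/5 + 3 ≤ (k:ℝ))
    {i : ℤ} (hi0 : 0 ≤ i) (hi6 : i < 6*k) :
    (Pt (ρh k i), Pt (ρh k (i+1))) ∈ OuterBonds R := by
  have hk1 : 1 ≤ k := hexk_one hR hk
  apply outer_of_norms (Pt_mem_TriLat _) (Pt_mem_TriLat _)
  · rw [Pt_sub]
    exact norm_vec_six (mem_six_adj k i hk1 hi0 hi6)
  · exact hex_outer_norm hR hk hi0 (le_of_lt hi6)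

lemma lin_diff (z e : ℤ × ℤ) (t : ℤ) : lin z e (t+1) - lin z e t = e := by
  simp only [lin, Prod.mk_sub_mk, Prod.ext_iff]
  constructor <;> ring

lemma lin_zero (z e : ℤ × ℤ) : lin z e 0 = z := by
  simp only [lin, zero_mul, add_zero]

lemma lin_norm_ge {z : ℤ × ℤ} (t : ℤ) (ht : 0 ≤ t) :
    ‖Pt z‖ ≤ ‖Pt (lin z (dirz z) t)‖ := by
  have h1 := NQ_lin_mono z t ht
  have h2 := norm_Pt_sq z
  have h3 := norm_Pt_sq (lin z (dirz z) t)
  apply sq_le_of_nonneg (norm_nonneg _) (norm_nonneg _)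
  rw [h2, h3]
  have : (NQ z : ℝ) ≤ (NQ (lin z (dirz z) t) : ℝ) := by exact_mod_cast h1
  linarith

lemma lin_bond_outer {R : ℝ} (hR : 4 ≤ R) {z : ℤ × ℤ} (hz : 3*R/4 - 1 ≤ ‖Pt z‖)
    (t : ℤ) (ht : 0 ≤ t) :
    (Pt (lin z (dirz z) t), Pt (lin z (dirz z) (t+1))) ∈ OuterBonds R := by
  apply outer_of_norms (Pt_mem_TriLat _) (Pt_mem_TriLat _)
  · rw [Pt_sub, lin_diff]
    exact norm_vec_six (mem_six_dirz z)
  · have := lin_norm_ge t ht (z := z)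
    linarith

/-- The pigeonhole sum bound over a window of hexagon levels. -/
lemma hex_window_sum {R : ℝ} (hR : 4 ≤ R) (u : E2 → ℝ)
    (hsB : Summable (fun b : Bonds => (u (b : E2 × E2).2 - u (b : E2 × E2).1) ^ 2))
    (W : Finset ℤ) (hW : ∀ k ∈ W, 6*R/5 + 3 ≤ (k:ℝ)) :
    ∑ k ∈ W, hexSum u k ≤
      ∑' (b : OuterBonds R), (u (b : E2 × E2).2 - u (b : E2 × E2).1)^2 := by
  classical
  set Dom : Finset ((_ : ℤ) × ℕ) := W.sigma (fun k => Finset.range ((6*k).toNat)) with hDom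
  set φ : ((_ : ℤ) × ℕ) → E2 × E2 :=
    fun σ => (Pt (ρh σ.1 (σ.2:ℤ)), Pt (ρh σ.1 ((σ.2:ℤ)+1))) with hφ
  have hmem : ∀ σ ∈ Dom, σ.1 ∈ W ∧ 0 ≤ (σ.2:ℤ) ∧ (σ.2:ℤ) < 6*σ.1 := by
    intro σ hσ
    rw [hDom, Finset.mem_sigma] at hσ
    refine ⟨hσ.1, Int.ofNat_nonneg _, ?_⟩
    have := Finset.mem_range.mp hσ.2
    omega
  have e1 : ∑ k ∈ W, hexSum u k = ∑ σ ∈ Dom, (fun p : E2 × E2 => (u p.2 - u p.1)^2) (φ σ) := by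
    rw [hDom, Finset.sum_sigma]
    rfl
  have hinj : Set.InjOn φ Dom := by
    intro σ hσ σ' hσ' heq
    obtain ⟨hW1, h10, h16⟩ := hmem σ (by exact_mod_cast hσ)
    obtain ⟨hW1', h10', h16'⟩ := hmem σ' (by exact_mod_cast hσ')
    have hk1 : 1 ≤ σ.1 := hexk_one hR (hW _ hW1)
    have hk1' : 1 ≤ σ'.1 := hexk_one hR (hW _ hW1')
    rw [hφ, Prod.ext_iff] at heq
    have hr1 : ρh σ.1 (σ.2:ℤ) = ρh σ'.1 (σ'.2:ℤ) := Pt_inj heq.1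
    have hkk : σ.1 = σ'.1 := by
      have l1 := ρh_level σ.1 (σ.2:ℤ) hk1 h10 (le_of_lt h16)
      have l2 := ρh_level σ'.1 (σ'.2:ℤ) hk1' h10' (le_of_lt h16')
      rw [← l1, ← l2, hr1]
    have hti : (σ.2 : ℤ) = (σ'.2 : ℤ) := by
      apply ρh_injOn σ.1 _ _ hk1 h10 h16 h10' (by rw [hkk]; exact h16')
      rw [hr1, hkk]
    have ht : σ.2 = σ'.2 := by exact_mod_cast hti
    exact Sigma.ext hkk (by rw [ht])
  have e3 : ∑ p ∈ Dom.image φ, (fun p : E2 × E2 => (u p.2 - u p.1)^2) p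
      = ∑ σ ∈ Dom, (fun p : E2 × E2 => (u p.2 - u p.1)^2) (φ σ) :=
    Finset.sum_image (fun a ha b hb hab => hinj ha hb hab)
  rw [e1, ← e3]
  apply sum_le_outer_tsum hsB
  intro p hp
  rw [Finset.mem_image] at hp
  obtain ⟨σ, hσ, rfl⟩ := hp
  obtain ⟨hW1, h10, h16⟩ := hmem σ hσ
  exact hex_bond_outer hR (hW _ hW1) h10 h16

/-- Multiplicity bound for the radial paths. -/
lemma radial_sum_bound {R : ℝ} (hR : 4 ≤ R) (u : E2 → ℝ)
    (hsB : Summable (fun b : Bonds => (u (b : E2 × E2).2 - u (b : E2 × E2).1) ^ 2))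
    (kk : ℤ) (hkk : 0 ≤ kk) :
    ∑ z ∈ ActiveF R, Az u kk z ≤
      ((kk:ℝ)+1) * ∑' (b : OuterBonds R), (u (b : E2 × E2).2 - u (b : E2 × E2).1)^2 := by
  classical
  set S := ∑' (b : OuterBonds R), (u (b : E2 × E2).2 - u (b : E2 × E2).1)^2 with hS
  have hS0 : 0 ≤ S := outer_tsum_nonneg u
  set Dom : Finset ((_ : ℤ × ℤ) × ℕ) :=
    (ActiveF R).sigma (fun z => Finset.range ((kk - hZ z).toNat)) with hDom
  set ψ : ((_ : ℤ × ℤ) × ℕ) → E2 × E2 := fun σ =>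
    (Pt (lin σ.1 (dirz σ.1) (σ.2:ℤ)), Pt (lin σ.1 (dirz σ.1) ((σ.2:ℤ)+1))) with hψ
  have e1 : ∑ z ∈ ActiveF R, Az u kk z
      = ∑ σ ∈ Dom, (fun p : E2 × E2 => (u p.2 - u p.1)^2) (ψ σ) := by
    rw [hDom, Finset.sum_sigma]
    rfl
  have e2 := Finset.sum_comp (s := Dom) (fun p : E2 × E2 => (u p.2 - u p.1)^2) ψ
  rw [e1, e2]
  have himg : ∀ p ∈ Dom.image ψ, p ∈ OuterBonds R := by
    intro p hp
    rw [Finset.mem_image] at hp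
    obtain ⟨σ, hσ, rfl⟩ := hp
    rw [hDom, Finset.mem_sigma] at hσ
    have hz := (Finset.mem_filter.mp hσ.1).2.1
    exact lin_bond_outer hR hz (σ.2:ℤ) (Int.ofNat_nonneg _)
  have hfib : ∀ p ∈ Dom.image ψ, (Dom.filter (fun σ => ψ σ = p)).card ≤ kk.toNat := by
    intro p _
    refine le_trans (Finset.card_le_card_of_injOn (t := Finset.range kk.toNat)
      (fun σ => σ.2) ?_ ?_) (le_of_eq (Finset.card_range _))
    · intro σ hσ
      rw [Finset.mem_coe, Finset.mem_filter, hDom, Finset.mem_sigma] at hσ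
      show σ.2 ∈ Finset.range kk.toNat
      rw [Finset.mem_range]
      have h1 := Finset.mem_range.mp hσ.1.2
      have h2 : 1 ≤ hZ σ.1 := by
        have hz := (Finset.mem_filter.mp hσ.1.1).2.1
        -- 3R/4 - 1 ≤ ‖Pt z‖ and hZ ≥ ‖Pt z‖ - 3/5
        have h3 := hZ_ge_norm σ.1
        have : (1:ℝ) ≤ (hZ σ.1 : ℝ) := by linarith
        exact_mod_cast this
      omega
    · intro σ hσ σ' hσ' ht
      rw [Finset.mem_coe, Finset.mem_filter] at hσ hσ'
      have heq : ψ σ = ψ σ' := by rw [hσ.2, hσ'.2]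
      rw [hψ, Prod.ext_iff] at heq
      simp only at ht
      have e1 : lin σ.1 (dirz σ.1) (σ.2:ℤ) = lin σ'.1 (dirz σ'.1) ((σ'.2:ℤ)) := Pt_inj heq.1
      have e2 : lin σ.1 (dirz σ.1) ((σ.2:ℤ)+1) = lin σ'.1 (dirz σ'.1) ((σ'.2:ℤ)+1) := Pt_inj heq.2
      rw [← ht] at e1 e2
      have hd : dirz σ.1 = dirz σ'.1 := by
        calc dirz σ.1 = lin σ.1 (dirz σ.1) ((σ.2:ℤ)+1) - lin σ.1 (dirz σ.1) (σ.2:ℤ) :=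
              (lin_diff _ _ _).symm
          _ = lin σ'.1 (dirz σ'.1) ((σ.2:ℤ)+1) - lin σ'.1 (dirz σ'.1) (σ.2:ℤ) := by rw [e1, e2]
          _ = dirz σ'.1 := lin_diff _ _ _
      have hz : σ.1 = σ'.1 := by
        rw [hd] at e1
        simp only [lin, Prod.ext_iff] at e1 ⊢
        constructor <;> linarith [e1.1, e1.2]
      exact Sigma.ext hz (by rw [← ht])
  calc ∑ b ∈ Dom.image ψ, (Dom.filter (fun σ => ψ σ = b)).card •
        (fun p : E2 × E2 => (u p.2 - u p.1)^2) b
      ≤ ∑ b ∈ Dom.image ψ, (kk.toNat : ℝ) * (u b.2 - u b.1)^2 := by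
        apply Finset.sum_le_sum
        intro b hb
        rw [nsmul_eq_mul]
        exact mul_le_mul_of_nonneg_right (by exact_mod_cast hfib b hb) (sq_nonneg _)
    _ = (kk.toNat : ℝ) * ∑ b ∈ Dom.image ψ, (u b.2 - u b.1)^2 := by rw [Finset.mul_sum]
    _ ≤ (kk.toNat : ℝ) * S := by
        apply mul_le_mul_of_nonneg_left _ (Nat.cast_nonneg _)
        exact sum_le_outer_tsum hsB _ himg
    _ ≤ ((kk:ℝ)+1) * S := by
        apply mul_le_mul_of_nonneg_right _ hS0
        have : ((kk.toNat : ℤ) : ℝ) = (kk:ℝ) := by rw [Int.toNat_of_nonneg hkk]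
        push_cast at this ⊢
        linarith

end St15
namespace St15

lemma sum_swap_sq (x y : ℝ) : (x - y)^2 = (y - x)^2 := by ring

lemma poincare {R : ℝ} (hR : 4 ≤ R) (u : E2 → ℝ)
    (hsB : Summable (fun b : Bonds => (u (b : E2 × E2).2 - u (b : E2 × E2).1) ^ 2)) :
    ∃ a : ℝ, ∑ z ∈ ActiveF R, (u (Pt z) - a)^2 ≤
      1000 * R^2 * ∑' (b : OuterBonds R), (u (b : E2 × E2).2 - u (b : E2 × E2).1)^2 := by
  classical
  set S := ∑' (b : OuterBonds R), (u (b : E2 × E2).2 - u (b : E2 × E2).1)^2 with hS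
  have hS0 : 0 ≤ S := outer_tsum_nonneg u
  have hRpos : (0:ℝ) < R := by linarith
  set k0 : ℤ := ⌈6*R/5⌉ + 2 with hk0
  have hk0l : 6*R/5 + 2 ≤ (k0:ℝ) := by rw [hk0]; push_cast; linarith [Int.le_ceil (6*R/5)]
  have hk0u : (k0:ℝ) ≤ 6*R/5 + 3 := by rw [hk0]; push_cast; linarith [(Int.ceil_lt_add_one (6*R/5)).le]
  set K : ℤ := ⌈R⌉ with hK
  have hKl : R ≤ (K:ℝ) := Int.le_ceil R
  have hKu : (K:ℝ) ≤ R + 1 := (Int.ceil_lt_add_one R).le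
  have hK1 : (1:ℤ) ≤ K := by
    have h : (1:ℝ) ≤ (K:ℝ) := by linarith
    exact_mod_cast h
  set W : Finset ℤ := Finset.Icc (k0+1) (k0+K) with hW
  have hWmem : ∀ k ∈ W, 6*R/5+3 ≤ (k:ℝ) ∧ (k:ℝ) ≤ 16*R/5 := by
    intro k hk
    rw [hW, Finset.mem_Icc] at hk
    have h1 : (k0:ℝ)+1 ≤ (k:ℝ) := by exact_mod_cast hk.1
    have h2 : (k:ℝ) ≤ (k0:ℝ) + (K:ℝ) := by exact_mod_cast hk.2
    constructor
    · linarith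
    · linarith
  have hC1 := hex_window_sum hR u hsB W (fun k hk => (hWmem k hk).1)
  rw [← hS] at hC1
  have hWne : W.Nonempty := ⟨k0+1, by rw [hW, Finset.mem_Icc]; omega⟩
  have hWcard : ((W.card : ℕ) : ℝ) = (K:ℝ) := by
    rw [hW, Int.card_Icc]
    have h : (k0 + K + 1 - (k0+1)) = K := by ring
    rw [h]
    have h2 : ((K.toNat : ℕ) : ℤ) = K := Int.toNat_of_nonneg (by omega)
    exact_mod_cast h2
  obtain ⟨kk, hkkW, hkkP⟩ : ∃ k ∈ W, hexSum u k ≤ S / R := by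
    by_contra hcon
    push_neg at hcon
    have h2 : ∑ _k ∈ W, (S/R) < ∑ k ∈ W, hexSum u k :=
      Finset.sum_lt_sum_of_nonempty hWne (fun k hk => hcon k hk)
    rw [Finset.sum_const, nsmul_eq_mul] at h2
    rw [hWcard] at h2
    have hdiv0 : 0 ≤ S / R := div_nonneg hS0 hRpos.le
    have h3 : R * (S/R) ≤ (K:ℝ) * (S/R) := mul_le_mul_of_nonneg_right hKl hdiv0
    have h4 : R * (S/R) = S := by field_simp
    linarith
  have hkk1 : (1:ℤ) ≤ kk := hexk_one hR (hWmem kk hkkW).1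
  have hkklb : 6*R/5+3 ≤ (kk:ℝ) := (hWmem kk hkkW).1
  have hkkub : (kk:ℝ) ≤ 16*R/5 := (hWmem kk hkkW).2
  have hkk0R : (0:ℝ) ≤ (kk:ℝ) := by linarith
  set a := u (Pt (kk, 0)) with ha
  refine ⟨a, ?_⟩
  have hhex0 : 0 ≤ hexSum u kk := hexSum_nonneg u kk
  have key : ∀ z ∈ ActiveF R,
      (u (Pt z) - a)^2 ≤ 2*(kk:ℝ)*(Az u kk z) + 12*(kk:ℝ)*hexSum u kk := by
    intro z hz
    obtain ⟨hzbox, hz1, hz2⟩ := Finset.mem_filter.mp hz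
    have hZlb : 1 ≤ hZ z := by
      have h3 := hZ_ge_norm z
      have h5 : (1:ℝ) ≤ (hZ z : ℝ) := by linarith
      exact_mod_cast h5
    have hZub : hZ z + 1 ≤ kk := by
      have h4 := hZ_le_of_norm hR hz2
      have h5 : (hZ z : ℝ) + 1 ≤ (kk:ℝ) := by linarith
      exact_mod_cast h5
    set T : ℤ := kk - hZ z with hT
    have hT0 : 0 ≤ T := by omega
    have hZlbR : (1:ℝ) ≤ (hZ z : ℝ) := by exact_mod_cast hZlb
    set d := dirz z with hd
    set zT := lin z d T with hzT
    have hZT : hZ zT = kk := by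
      rw [hzT, hd, hZ_lin z hZlb T hT0]; omega
    obtain ⟨i, hi0, hi6, hieq⟩ := ρh_cover kk hkk1 zT hZT
    -- A bound
    have hA : (u (Pt zT) - u (Pt z))^2 ≤ (kk:ℝ) * Az u kk z := by
      have htele := tele (fun t : ℕ => u (Pt (lin z d (t:ℤ)))) T.toNat
      have hfT : ((T.toNat : ℕ) : ℤ) = T := Int.toNat_of_nonneg hT0
      simp only [Nat.cast_zero] at htele
      rw [hfT, lin_zero] at htele
      have hAz : ∑ t ∈ Finset.range T.toNat,
          ((fun t : ℕ => u (Pt (lin z d (t:ℤ)))) (t+1) - (fun t : ℕ => u (Pt (lin z d (t:ℤ)))) t)^2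
          = Az u kk z := by
        rw [Az, ← hT, ← hd]
        apply Finset.sum_congr rfl
        intro t _
        norm_cast
      rw [hAz] at htele
      have hTle : ((T.toNat : ℕ) : ℝ) ≤ (kk:ℝ) := by
        have h6 : ((T.toNat : ℕ) : ℤ) ≤ kk := by omega
        exact_mod_cast h6
      calc (u (Pt zT) - u (Pt z))^2 ≤ (T.toNat : ℝ) * Az u kk z := htele
        _ ≤ (kk:ℝ) * Az u kk z := mul_le_mul_of_nonneg_right hTle (Az_nonneg u kk z)
    -- B bound
    have hB : (u (Pt zT) - a)^2 ≤ 6*(kk:ℝ) * hexSum u kk := by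
      have htele := tele (fun t : ℕ => u (Pt (ρh kk (t:ℤ)))) i.toNat
      have hfi : ((i.toNat : ℕ) : ℤ) = i := Int.toNat_of_nonneg hi0
      simp only [Nat.cast_zero] at htele
      rw [hfi, hieq, ρh_zero kk hkk1, ← ha] at htele
      have hsub : ∑ t ∈ Finset.range i.toNat,
          ((fun t : ℕ => u (Pt (ρh kk (t:ℤ)))) (t+1) - (fun t : ℕ => u (Pt (ρh kk (t:ℤ)))) t)^2
          ≤ hexSum u kk := by
        rw [hexSum]
        apply le_trans (le_of_eq ?_) (Finset.sum_le_sum_of_subset_of_nonneg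
          (Finset.range_subset_range.mpr (show i.toNat ≤ (6*kk).toNat by omega))
          (fun _ _ _ => sq_nonneg _))
        apply Finset.sum_congr rfl
        intro t _
        norm_cast
      have hile : ((i.toNat : ℕ) : ℝ) ≤ 6*(kk:ℝ) := by
        have h6 : ((i.toNat : ℕ) : ℤ) ≤ 6*kk := by omega
        exact_mod_cast h6
      calc (u (Pt zT) - a)^2 ≤ (i.toNat : ℝ) * ∑ t ∈ Finset.range i.toNat,
            ((fun t : ℕ => u (Pt (ρh kk (t:ℤ)))) (t+1) - (fun t : ℕ => u (Pt (ρh kk (t:ℤ)))) t)^2 := htele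
        _ ≤ 6*(kk:ℝ) * hexSum u kk := by
            apply mul_le_mul hile hsub (Finset.sum_nonneg (fun _ _ => sq_nonneg _)) (by linarith)
    have hswap : (u (Pt z) - u (Pt zT))^2 = (u (Pt zT) - u (Pt z))^2 := by ring
    have hcomb := sq_add_le (x := u (Pt z)) (y := u (Pt zT)) (z := a)
    rw [hswap] at hcomb
    linarith
  have hsum := Finset.sum_le_sum key
  have e4 : ∑ z ∈ ActiveF R, (2*(kk:ℝ)*(Az u kk z) + 12*(kk:ℝ)*hexSum u kk)
      = 2*(kk:ℝ) * (∑ z ∈ ActiveF R, Az u kk z)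
        + ((ActiveF R).card : ℝ) * (12*(kk:ℝ)*hexSum u kk) := by
    rw [Finset.sum_add_distrib, ← Finset.mul_sum, Finset.sum_const, nsmul_eq_mul]
  rw [e4] at hsum
  have hAzsum := radial_sum_bound hR u hsB kk (by omega)
  rw [← hS] at hAzsum
  have hAz0 : 0 ≤ ∑ z ∈ ActiveF R, Az u kk z :=
    Finset.sum_nonneg (fun z _ => Az_nonneg u kk z)
  have hcard := card_ActiveF (R := R) hR
  have hcard0 : (0:ℝ) ≤ ((ActiveF R).card : ℝ) := Nat.cast_nonneg _
  -- numeric part 1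
  have b1 : 2*(kk:ℝ) * (∑ z ∈ ActiveF R, Az u kk z) ≤ 2*(kk:ℝ)*(((kk:ℝ)+1)*S) := by
    apply mul_le_mul_of_nonneg_left hAzsum (by linarith)
  have c1 : (0:ℝ) ≤ 24*R^2 - 2*(kk:ℝ)*((kk:ℝ)+1) := by nlinarith
  have b1' : 2*(kk:ℝ)*(((kk:ℝ)+1)*S) ≤ 24*R^2*S := by nlinarith [mul_nonneg hS0 c1]
  -- numeric part 2
  have b2 : ((ActiveF R).card : ℝ) * (12*(kk:ℝ)*hexSum u kk) ≤ (4*R+3)^2 * (12*(kk:ℝ)*(S/R)) := by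
    have hc : (0:ℝ) ≤ 12*(kk:ℝ)*hexSum u kk := mul_nonneg (by linarith) hhex0
    have hb : (0:ℝ) ≤ (4*R+3)^2 := by positivity
    exact mul_le_mul hcard (mul_le_mul_of_nonneg_left hkkP (by linarith)) hc hb
  have hx0 : (0:ℝ) ≤ S / R := div_nonneg hS0 hRpos.le
  have hxR : (S/R)*R = S := by field_simp
  have c2 : (0:ℝ) ≤ 976*R^3 - 12*(kk:ℝ)*(4*R+3)^2 := by nlinarith
  have b2' : (4*R+3)^2 * (12*(kk:ℝ)*(S/R)) ≤ 976*R^2*S := by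
    have h5 : (4*R+3)^2*(12*(kk:ℝ)*(S/R)) = 12*(kk:ℝ)*(4*R+3)^2*(S/R) := by ring
    have h6 : 976*R^2*S = 976*R^3*(S/R) := by field_simp
    rw [h5, h6]
    exact mul_le_mul_of_nonneg_right (by linarith) hx0
  calc ∑ z ∈ ActiveF R, (u (Pt z) - a)^2
      ≤ 2*(kk:ℝ) * (∑ z ∈ ActiveF R, Az u kk z)
        + ((ActiveF R).card : ℝ) * (12*(kk:ℝ)*hexSum u kk) := hsum
    _ ≤ 24*R^2*S + 976*R^2*S := by linarith
    _ = 1000*R^2*S := by ring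

end St15

namespace St15

lemma scaled_norm {R : ℝ} (hR : 0 < R) (x : E2) : ‖R⁻¹ • x‖ = ‖x‖ / R := by
  rw [norm_smul, Real.norm_eq_abs, abs_inv, abs_of_pos hR]
  rw [inv_mul_eq_div]

lemma norm_la1 : ‖la1‖ = 1 := by
  have h : ‖la1‖^2 = 1 := by rw [← real_inner_self_eq_norm_sq, inner_la11]
  nlinarith [norm_nonneg la1]

def TransSet (R : ℝ) (u : E2 → ℝ) : Set (E2 × E2) :=
  {p | p ∈ Bonds ∧ 3*R/4 - 1 ≤ ‖p.1‖ ∧ ‖p.1‖ ≤ R+1 ∧ 3*R/4 - 1 ≤ ‖p.2‖ ∧ ‖p.2‖ ≤ R+1}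

end St15

set_option maxHeartbeats 2000000
open St15

/-- Truncation operator estimate: Π_R u(ξ) = η(ξ/R)(u(ξ) − a_R) agrees with u (up to the
constant shift) on bonds inside B_{R/2}, and ‖DΠ_R u − Du‖²_{ℓ²} ≤ γ ‖Du‖²_{ℓ²(B∖B_{R/2})}
with γ independent of R and u. -/
theorem stmt15 (η : E2 → ℝ) (C₀ : ℝ) (hη : ContDiff ℝ 1 η)
    (hη1 : ∀ x ∈ ball (0 : E2) (3 / 4), η x = 1)
    (hη0 : ∀ x : E2, x ∉ ball (0 : E2) 1 → η x = 0)
    (hηd : ∀ x : E2, ‖fderiv ℝ η x‖ ≤ C₀) :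
    ∃ γ : ℝ, 0 < γ ∧
      ∀ R : ℝ, 4 ≤ R →
      ∀ u : E2 → ℝ,
      Summable (fun b : Bonds => (u (b : E2 × E2).2 - u (b : E2 × E2).1) ^ 2) →
      ∃ aR : ℝ,
        (∀ b ∈ Bonds, b.1 ∈ ball (0 : E2) (R / 2) → b.2 ∈ ball (0 : E2) (R / 2) →
          (η (R⁻¹ • b.2) * (u b.2 - aR) - η (R⁻¹ • b.1) * (u b.1 - aR)) =
            u b.2 - u b.1) ∧
        (∑' b : Bonds,
            ((η (R⁻¹ • (b : E2 × E2).2) * (u (b : E2 × E2).2 - aR) -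
              η (R⁻¹ • (b : E2 × E2).1) * (u (b : E2 × E2).1 - aR)) -
             (u (b : E2 × E2).2 - u (b : E2 × E2).1)) ^ 2) ≤
          γ * ∑' b : OuterBonds R, (u (b : E2 × E2).2 - u (b : E2 × E2).1) ^ 2 := by
  classical
  have hC0 : 0 ≤ C₀ := le_trans (norm_nonneg _) (hηd 0)
  -- Lipschitz bound for η
  have ηlip : ∀ x y : E2, |η x - η y| ≤ C₀ * ‖x - y‖ := by
    intro x y
    have h := convex_univ.norm_image_sub_le_of_norm_fderiv_le
      (fun z _ => (hη.differentiable one_ne_zero).differentiableAt)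
      (fun z _ => hηd z) (Set.mem_univ y) (Set.mem_univ x)
    simpa [Real.norm_eq_abs] using h
  -- boundedness of η
  have ηbd : ∀ x : E2, |η x| ≤ 2 * C₀ := by
    intro x
    by_cases hx : x ∈ ball (0 : E2) 1
    · have hy : x - (2:ℝ) • la1 ∉ ball (0 : E2) 1 := by
        rw [mem_ball_zero_iff] at hx ⊢
        push_neg
        have h1 : ‖(2:ℝ) • la1‖ = 2 := by
          rw [norm_smul, Real.norm_eq_abs, norm_la1]; norm_num
        have h2 := norm_sub_norm_le ((2:ℝ) • la1) x
        rw [h1] at h2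
        have h3 : ‖(2:ℝ) • la1 - x‖ = ‖x - (2:ℝ) • la1‖ := norm_sub_rev _ _
        linarith
      have h0 : η (x - (2:ℝ) • la1) = 0 := hη0 _ hy
      have h4 := ηlip x (x - (2:ℝ) • la1)
      rw [h0, sub_zero] at h4
      have h5 : ‖x - (x - (2:ℝ) • la1)‖ = 2 := by
        rw [show x - (x - (2:ℝ) • la1) = (2:ℝ) • la1 by abel]
        rw [norm_smul, Real.norm_eq_abs, norm_la1]; norm_num
      rw [h5] at h4
      linarith
    · rw [hη0 x hx]
      simp [hC0]
  have ηm1 : ∀ x : E2, |η x - 1| ≤ 1 + 2*C₀ := by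
    intro x
    have := ηbd x
    have h1 := abs_sub (η x) 1  -- maybe wrong name
    calc |η x - 1| ≤ |η x| + |(1:ℝ)| := abs_sub _ _
      _ ≤ 1 + 2*C₀ := by rw [abs_one]; linarith
  refine ⟨1 + 2*(1+2*C₀)^2 + 12000*C₀^2, by positivity, ?_⟩
  intro R hR u hsB
  have hRpos : (0:ℝ) < R := by linarith
  obtain ⟨a, hP⟩ := poincare hR u hsB
  refine ⟨a, ?_, ?_⟩
  · -- bonds inside the ball
    intro b hb h1 h2
    rw [mem_ball_zero_iff] at h1 h2
    have e1 : η (R⁻¹ • b.1) = 1 := by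
      apply hη1
      rw [mem_ball_zero_iff, scaled_norm hRpos]
      rw [div_lt_iff₀ hRpos]
      linarith
    have e2 : η (R⁻¹ • b.2) = 1 := by
      apply hη1
      rw [mem_ball_zero_iff, scaled_norm hRpos]
      rw [div_lt_iff₀ hRpos]
      linarith
    rw [e1, e2]
    ring
  · -- the main estimate
    set S := ∑' b : OuterBonds R, (u (b : E2 × E2).2 - u (b : E2 × E2).1) ^ 2 with hhS
    have hS0 : 0 ≤ S := outer_tsum_nonneg u
    set g' : E2 × E2 → ℝ := fun p => (u p.2 - u p.1)^2 with hg'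
    set f2 : E2 × E2 → ℝ := fun p => (u p.1 - a)^2 with hf2
    set D : Bonds → ℝ := fun b =>
      ((η (R⁻¹ • (b : E2 × E2).2) * (u (b : E2 × E2).2 - a) -
        η (R⁻¹ • (b : E2 × E2).1) * (u (b : E2 × E2).1 - a)) -
       (u (b : E2 × E2).2 - u (b : E2 × E2).1)) ^ 2 with hD
    set G : Bonds → ℝ := fun b =>
      (1+2*(1+2*C₀)^2) * Set.indicator (OuterBonds R) g' (b : E2 × E2) +
      (2*C₀^2/R^2) * Set.indicator (TransSet R u) f2 (b : E2 × E2) with hG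
    -- pointwise bound
    have hpoint : ∀ b : Bonds, D b ≤ G b := by
      intro b
      obtain ⟨hb1, hb2, hb3⟩ := b.2
      have hind1 : 0 ≤ Set.indicator (OuterBonds R) g' (b : E2 × E2) :=
        Set.indicator_nonneg (fun q _ => sq_nonneg _) _
      have hind2 : 0 ≤ Set.indicator (TransSet R u) f2 (b : E2 × E2) :=
        Set.indicator_nonneg (fun q _ => sq_nonneg _) _
      have hco : (0:ℝ) ≤ 2*C₀^2/R^2 := by positivity
      by_cases hc1 : ‖(b : E2 × E2).1‖ < 3*R/4 ∧ ‖(b : E2 × E2).2‖ < 3*R/4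
      · have e1 : η (R⁻¹ • (b : E2 × E2).1) = 1 := by
          apply hη1
          rw [mem_ball_zero_iff, scaled_norm hRpos, div_lt_iff₀ hRpos]
          linarith [hc1.1]
        have e2 : η (R⁻¹ • (b : E2 × E2).2) = 1 := by
          apply hη1
          rw [mem_ball_zero_iff, scaled_norm hRpos, div_lt_iff₀ hRpos]
          linarith [hc1.2]
        have hD0 : D b = 0 := by
          simp only [hD, e1, e2]
          ring_nf
        rw [hD0]
        simp only [hG]
        have h1 : (0:ℝ) ≤ 1+2*(1+2*C₀)^2 := by positivity
        nlinarith [mul_nonneg h1 hind1, mul_nonneg hco hind2]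
      · -- outside case: both norms ≥ 3R/4 - 1
        push_neg at hc1
        have hdist : |‖(b : E2 × E2).2‖ - ‖(b : E2 × E2).1‖| ≤ 1 := by
          rw [← hb3]
          exact abs_norm_sub_norm_le _ _
        rw [abs_le] at hdist
        have hboth : 3*R/4 - 1 ≤ ‖(b : E2 × E2).1‖ ∧ 3*R/4 - 1 ≤ ‖(b : E2 × E2).2‖ := by
          rcases lt_or_ge ‖(b : E2 × E2).1‖ (3*R/4) with h | h
          · have := hc1 h
            constructor <;> linarith
          · constructor <;> linarith
        have houter : (b : E2 × E2) ∈ OuterBonds R := by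
          refine ⟨⟨hb1, hb2, hb3⟩, Or.inl ?_⟩
          rw [mem_ball_zero_iff]
          push_neg
          linarith [hboth.1]
        have hindO : Set.indicator (OuterBonds R) g' (b : E2 × E2) = g' (b : E2 × E2) :=
          Set.indicator_of_mem houter _
        by_cases hc2 : R ≤ ‖(b : E2 × E2).1‖ ∧ R ≤ ‖(b : E2 × E2).2‖
        · have e1 : η (R⁻¹ • (b : E2 × E2).1) = 0 := by
            apply hη0
            rw [mem_ball_zero_iff, scaled_norm hRpos]
            push_neg
            rw [le_div_iff₀ hRpos]
            linarith [hc2.1]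
          have e2 : η (R⁻¹ • (b : E2 × E2).2) = 0 := by
            apply hη0
            rw [mem_ball_zero_iff, scaled_norm hRpos]
            push_neg
            rw [le_div_iff₀ hRpos]
            linarith [hc2.2]
          have hDval : D b = g' (b : E2 × E2) := by
            simp only [hD, hg', e1, e2]
            ring_nf
          rw [hDval]
          simp only [hG]
          rw [hindO]
          have hgb : 0 ≤ g' (b : E2 × E2) := sq_nonneg _
          have h7 : 0 ≤ (2*(1+2*C₀)^2) * g' (b : E2 × E2) :=
            mul_nonneg (by positivity) hgb
          have h8 := mul_nonneg hco hind2
          nlinarith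
        · -- transition case
          push_neg at hc2
          have htrans : (b : E2 × E2) ∈ TransSet R u := by
            refine ⟨⟨hb1, hb2, hb3⟩, hboth.1, ?_, hboth.2, ?_⟩
            · rcases le_or_gt R ‖(b : E2 × E2).1‖ with h | h
              · have := hc2 h
                linarith
              · linarith
            · rcases le_or_gt R ‖(b : E2 × E2).1‖ with h | h
              · have := hc2 h
                linarith
              · linarith
          have hindT : Set.indicator (TransSet R u) f2 (b : E2 × E2) = f2 (b : E2 × E2) :=
            Set.indicator_of_mem htrans _
          -- the estimate
          obtain ⟨e2v, he2v⟩ : ∃ x, η (R⁻¹ • (b : E2 × E2).2) = x := ⟨_, rfl⟩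
          obtain ⟨e1v, he1v⟩ : ∃ x, η (R⁻¹ • (b : E2 × E2).1) = x := ⟨_, rfl⟩
          obtain ⟨u2, hu2⟩ : ∃ x, u (b : E2 × E2).2 = x := ⟨_, rfl⟩
          obtain ⟨u1, hu1⟩ : ∃ x, u (b : E2 × E2).1 = x := ⟨_, rfl⟩
          have hlip : |e2v - e1v| ≤ C₀ / R := by
            rw [← he2v, ← he1v]
            have h := ηlip (R⁻¹ • (b : E2 × E2).2) (R⁻¹ • (b : E2 × E2).1)
            have h2 : R⁻¹ • (b : E2 × E2).2 - R⁻¹ • (b : E2 × E2).1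
                = R⁻¹ • ((b : E2 × E2).2 - (b : E2 × E2).1) := (smul_sub _ _ _).symm
            rw [h2, scaled_norm hRpos, hb3] at h
            calc |η (R⁻¹ • (b : E2 × E2).2) - η (R⁻¹ • (b : E2 × E2).1)| ≤ C₀ * (1/R) := h
              _ = C₀ / R := by ring
          have hm1 : |e2v - 1| ≤ 1 + 2*C₀ := by rw [← he2v]; exact ηm1 _
          have hgval : g' (b : E2 × E2) = (u2 - u1)^2 := by simp only [hg', hu2, hu1]
          have hfval : f2 (b : E2 × E2) = (u1 - a)^2 := by simp only [hf2, hu1]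
          have hDle : D b ≤ 2*(1+2*C₀)^2 * (u2 - u1)^2 + 2*(C₀/R)^2 * (u1 - a)^2 := by
            have hDval : D b = ((e2v * (u2 - a) - e1v * (u1 - a)) - (u2 - u1))^2 := by
              simp only [hD, he2v, he1v, hu2, hu1]
            rw [hDval]
            have hexp : (e2v * (u2 - a) - e1v * (u1 - a)) - (u2 - u1)
                = (e2v - 1) * (u2 - u1) + (e2v - e1v) * (u1 - a) := by ring
            rw [hexp]
            have hs1 : (e2v - 1)^2 ≤ (1+2*C₀)^2 :=
              sq_le_sq' (by linarith [(abs_le.mp hm1).1]) (abs_le.mp hm1).2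
            have hs2 : (e2v - e1v)^2 ≤ (C₀/R)^2 :=
              sq_le_sq' (by linarith [(abs_le.mp hlip).1]) (abs_le.mp hlip).2
            nlinarith [sq_nonneg ((e2v - 1) * (u2 - u1) - (e2v - e1v) * (u1 - a)),
              sq_nonneg (u2 - u1), sq_nonneg (u1 - a),
              mul_le_mul_of_nonneg_right hs1 (sq_nonneg (u2 - u1)),
              mul_le_mul_of_nonneg_right hs2 (sq_nonneg (u1 - a))]
          simp only [hG]
          rw [hindO, hindT, hgval, hfval]
          have hCR : 2*(C₀/R)^2 = 2*C₀^2/R^2 := by field_simp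
          have hgnn : (0:ℝ) ≤ (u2 - u1)^2 := sq_nonneg _
          rw [hCR] at hDle
          linarith
    -- summability and tsum assembly
    have hco : (0:ℝ) ≤ 2*C₀^2/R^2 := by positivity
    have hsumO : Summable (fun b : Bonds => Set.indicator (OuterBonds R) g' (b : E2 × E2)) := by
      apply Summable.of_nonneg_of_le
        (fun b => Set.indicator_nonneg (fun q _ => sq_nonneg _) _) ?_ hsB
      intro b
      exact Set.indicator_le_self' (fun q _ => sq_nonneg _) _
    set SF : Finset (E2 × E2) :=
      ((ActiveF R) ×ˢ six).image (fun w : (ℤ×ℤ) × (ℤ×ℤ) => (Pt w.1, Pt (w.1 + w.2))) with hSF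
    have hsupp : ∀ p : E2 × E2, p ∉ SF → Set.indicator (TransSet R u) f2 p = 0 := by
      intro p hp
      rw [Set.indicator_apply_eq_zero]
      intro hpT
      exfalso
      apply hp
      obtain ⟨⟨hpB1, hpB2, hpB3⟩, ht1, ht2, ht3, ht4⟩ := hpT
      rw [TriLat_eq_range] at hpB1 hpB2
      obtain ⟨z, hz⟩ := hpB1
      obtain ⟨w, hw⟩ := hpB2
      have hQ : Qf (w - z) = 1 := by
        have h1 : ‖vec (w - z)‖ = 1 := by
          rw [← Pt_sub, hz, hw]
          exact hpB3
        have h2 : ‖vec (w - z)‖^2 = (1:ℝ) := by rw [h1]; norm_num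
        rw [norm_vec_sq] at h2
        exact_mod_cast h2
      have hsix : w - z ∈ six := Qf_eq_one_iff.mp hQ
      have hzA : z ∈ ActiveF R := by
        apply mem_ActiveF hR
        · rw [hz]; exact ht1
        · rw [hz]; exact ht2
      rw [hSF, Finset.mem_image]
      refine ⟨(z, w - z), Finset.mem_product.mpr ⟨hzA, hsix⟩, ?_⟩
      simp only
      rw [add_sub_cancel]
      rw [hz, hw]
    have hsumTfull : Summable (Set.indicator (TransSet R u) f2) :=
      summable_of_ne_finset_zero hsupp
    have hsumT : Summable (fun b : Bonds => Set.indicator (TransSet R u) f2 (b : E2 × E2)) :=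
      hsumTfull.subtype _
    have hsumG : Summable G := by
      rw [hG]
      exact (hsumO.mul_left _).add (hsumT.mul_left _)
    have hsumD : Summable D :=
      Summable.of_nonneg_of_le (fun b => sq_nonneg _) hpoint hsumG
    have hle := Summable.tsum_le_tsum hpoint hsumD hsumG
    have hG' : ∑' b : Bonds, G b
        = (1+2*(1+2*C₀)^2) * (∑' b : Bonds, Set.indicator (OuterBonds R) g' (b : E2 × E2))
          + (2*C₀^2/R^2) * (∑' b : Bonds, Set.indicator (TransSet R u) f2 (b : E2 × E2)) := by
      simp only [hG]
      rw [Summable.tsum_add (hsumO.mul_left _) (hsumT.mul_left _), tsum_mul_left, tsum_mul_left]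
    have hT1 : (∑' b : Bonds, Set.indicator (OuterBonds R) g' (b : E2 × E2)) = S := by
      have h1 : ∑' b : Bonds, Set.indicator (OuterBonds R) g' (b : E2 × E2)
          = ∑' p : E2 × E2, Set.indicator Bonds (Set.indicator (OuterBonds R) g') p := by
        simpa using tsum_subtype Bonds (Set.indicator (OuterBonds R) g')
      rw [h1, Set.indicator_indicator,
        Set.inter_eq_self_of_subset_right (fun p (hp : p ∈ OuterBonds R) => hp.1)]
      rw [hhS, hg', outer_tsum_eq]
    have hT2 : (∑' b : Bonds, Set.indicator (TransSet R u) f2 (b : E2 × E2))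
        ≤ 6 * (1000*R^2*S) := by
      have h1 : ∑' b : Bonds, Set.indicator (TransSet R u) f2 (b : E2 × E2)
          = ∑' p : E2 × E2, Set.indicator Bonds (Set.indicator (TransSet R u) f2) p := by
        simpa using tsum_subtype Bonds (Set.indicator (TransSet R u) f2)
      rw [h1, Set.indicator_indicator,
        Set.inter_eq_self_of_subset_right (fun p (hp : p ∈ TransSet R u) => hp.1)]
      rw [tsum_eq_sum (s := SF) (fun p hp => hsupp p hp)]
      have step1 : ∑ p ∈ SF, Set.indicator (TransSet R u) f2 p ≤ ∑ p ∈ SF, f2 p :=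
        Finset.sum_le_sum (fun p _ => Set.indicator_le_self' (fun q _ => sq_nonneg _) p)
      have step2 : ∑ p ∈ SF, f2 p
          ≤ ∑ w ∈ (ActiveF R) ×ˢ six, f2 (Pt w.1, Pt (w.1 + w.2)) := by
        rw [hSF]
        exact sum_image_le _ _ _ (fun p => sq_nonneg _)
      have step3 : ∑ w ∈ (ActiveF R) ×ˢ six, f2 (Pt w.1, Pt (w.1 + w.2))
          = 6 * ∑ z ∈ ActiveF R, (u (Pt z) - a)^2 := by
        rw [Finset.sum_product]
        have hc6 : (six.card : ℝ) = 6 := by rw [show six.card = 6 from rfl]; norm_num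
        have e5 : ∀ z ∈ ActiveF R, ∑ _e ∈ six, f2 (Pt z, Pt (z + _e))
            = 6 * (u (Pt z) - a)^2 := by
          intro z _
          simp only [hf2]
          rw [Finset.sum_const, nsmul_eq_mul]
          rw [show six.card = 6 from rfl]
          norm_num
        rw [Finset.sum_congr rfl e5, ← Finset.mul_sum]
      have step4 : 6 * ∑ z ∈ ActiveF R, (u (Pt z) - a)^2 ≤ 6 * (1000*R^2*S) := by
        linarith [hP]
      linarith
    have hfinal : (2*C₀^2/R^2) * (∑' b : Bonds, Set.indicator (TransSet R u) f2 (b : E2 × E2))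
        ≤ 12000*C₀^2*S := by
      have hcoeff : (2*C₀^2/R^2)*(6*(1000*R^2*S)) = 12000*C₀^2*S := by
        field_simp
        ring
      calc (2*C₀^2/R^2) * (∑' b : Bonds, Set.indicator (TransSet R u) f2 (b : E2 × E2))
          ≤ (2*C₀^2/R^2)*(6*(1000*R^2*S)) := mul_le_mul_of_nonneg_left hT2 hco
        _ = 12000*C₀^2*S := hcoeff
    calc (∑' b : Bonds, D b) ≤ ∑' b : Bonds, G b := hle
      _ = (1+2*(1+2*C₀)^2) * (∑' b : Bonds, Set.indicator (OuterBonds R) g' (b : E2 × E2))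
          + (2*C₀^2/R^2) * (∑' b : Bonds, Set.indicator (TransSet R u) f2 (b : E2 × E2)) := hG'
      _ ≤ (1+2*(1+2*C₀)^2) * S + 12000*C₀^2*S := by
          rw [hT1]
          linarith
      _ = (1 + 2*(1+2*C₀)^2 + 12000*C₀^2) * S := by ring

end
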